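/- Let t ≥ 1 be an integer and let s be an integer with 1 ≤ s ≤ t. Let d_1,…,d_t be integers with d_p ∈ {0,1} for all p. Then the following two conditions hold simultaneously — (A) for every p ∈ {1,…,t}: s ≥ p − t·d_p and s ≤ p + t·d_p, and (B) there exist integers c_1,…,c_t with c_ℓ ∈ {0,1} for all ℓ, c_1 = d_1, c_ℓ = c_{ℓ−1} + d_ℓ − 1 for all ℓ ∈ {2,…,t}, and c_t = 0 — if and only if for every p ∈ {1,…,t}: d_p = 0 if p = s and d_p = 1 if p ≠ s. -/

import Mathlib

/-- Correctness of the instance-selector gadget: for `1 ≤ s ≤ t` and 0/1-values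
`d p`, the constraints `p - t·d p ≤ s ≤ p + t·d p` for all `p ∈ {1,…,t}`
together with the chain constraints on `c` are satisfiable iff `d p = 0`
exactly when `p = s` and `d p = 1` otherwise. -/
theorem selector_gadget_correct (t s : ℤ) (ht : 1 ≤ t) (hs1 : 1 ≤ s) (hs2 : s ≤ t)
    (d : ℤ → ℤ) (hd : ∀ p, 1 ≤ p → p ≤ t → d p = 0 ∨ d p = 1) :
    ((∀ p, 1 ≤ p → p ≤ t → (p - t * d p ≤ s ∧ s ≤ p + t * d p)) ∧
      ∃ c : ℤ → ℤ,
        (∀ ℓ, 1 ≤ ℓ → ℓ ≤ t → (c ℓ = 0 ∨ c ℓ = 1)) ∧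
        c 1 = d 1 ∧
        (∀ ℓ, 2 ≤ ℓ → ℓ ≤ t → c ℓ = c (ℓ - 1) + d ℓ - 1) ∧
        c t = 0) ↔
    (∀ p, 1 ≤ p → p ≤ t → ((p = s → d p = 0) ∧ (p ≠ s → d p = 1))) := by
  constructor
  · rintro ⟨hA, c, hc01, hc1, hrec, hct⟩
    have key : ∃ p, 1 ≤ p ∧ p ≤ t ∧ d p = 0 := by
      by_contra h
      push_neg at h
      have hall : ∀ p, 1 ≤ p → p ≤ t → d p = 1 := by
        intro p h1 h2
        rcases hd p h1 h2 with h0 | h1'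
        · exact absurd h0 (h p h1 h2)
        · exact h1'
      have hone : ∀ ℓ, 1 ≤ ℓ → ℓ ≤ t → c ℓ = 1 := by
        intro ℓ h1
        refine Int.le_induction (motive := fun ℓ _ => ℓ ≤ t → c ℓ = 1) ?_ ?_ ℓ h1
        · intro hle
          rw [hc1, hall 1 le_rfl hle]
        · intro ℓ hℓ ih hle
          have hr : c (ℓ + 1) = c (ℓ + 1 - 1) + d (ℓ + 1) - 1 :=
            hrec (ℓ + 1) (by linarith) hle
          have he : ℓ + 1 - 1 = ℓ := by ring
          rw [he] at hr
          rw [hr, ih (by linarith), hall (ℓ + 1) (by linarith) hle]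
          ring
      have := hone t (by linarith) le_rfl
      omega
    obtain ⟨q, hq1, hq2, hq0⟩ := key
    have hqs : q = s := by
      have hA' := hA q hq1 hq2
      rw [hq0, mul_zero] at hA'
      omega
    intro p h1 h2
    constructor
    · intro hps; rw [hps, ← hqs]; exact hq0
    · intro hps
      rcases hd p h1 h2 with h0 | h1'
      · exfalso
        have hA' := hA p h1 h2
        rw [h0, mul_zero] at hA'
        exact hps (by omega)
      · exact h1'
  · intro hD
    constructor
    · intro p h1 h2
      rcases hd p h1 h2 with h0 | h1'
      · have hps : p = s := by
          by_contra hne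
          have := (hD p h1 h2).2 hne; omega
        rw [h0, mul_zero]; omega
      · rw [h1', mul_one]; omega
    · refine ⟨fun ℓ => if ℓ < s then 1 else 0, ?_, ?_, ?_, ?_⟩
      · intro ℓ _ _
        by_cases h : ℓ < s <;> simp [h]
      · by_cases h : (1:ℤ) < s
        · have := (hD 1 le_rfl ht).2 (by omega)
          simp [h, this]
        · have hse : ¬ ((1:ℤ) < s) := h
          have hs' : s = 1 := by omega
          have := (hD 1 le_rfl ht).1 hs'.symm
          simp [hse, this]
      · intro ℓ h2 hℓt
        have h1 : 1 ≤ ℓ := by linarith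
        have hdℓ := hD ℓ h1 hℓt
        by_cases hlt : ℓ < s
        · have h1' : ℓ - 1 < s := by omega
          have := hdℓ.2 (by omega)
          simp [hlt, h1', this]
        · by_cases heq : ℓ = s
          · have h1' : ℓ - 1 < s := by omega
            have := hdℓ.1 heq
            simp [hlt, h1', this]
          · have h1' : ¬ (ℓ - 1 < s) := by omega
            have := hdℓ.2 heq
            simp [hlt, h1', this]
      · simp [not_lt.mpr hs2, show ¬ t < s by omega]
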